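/- Let E = {|ψ_j⟩} be a uniform state t-design in a q-dimensional Hilbert space, and let P be an orthogonal projector onto a d-dimensional subspace V with d ≤ q. Define normalized projected states |ψ̃_j⟩ = P|ψ_j⟩/‖P|ψ_j⟩‖ (omitting j with P|ψ_j⟩ = 0) and weights w̃_j = ‖P|ψ_j⟩‖^{2t} / Σ_k ‖P|ψ_k⟩‖^{2t}. Then the weighted ensemble {(w̃_j, |ψ̃_j⟩)} is a weighted state t-design for V: Σ_j w̃_j (|ψ̃_j⟩⟨ψ̃_j|)^{⊗t} equals the normalized projector onto the symmetric subspace of V^{⊗t}. -/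

import Mathlib

open Matrix

/-- Projector onto the symmetric subspace of `(ℂ^q)^{⊗ t}`. -/
noncomputable def symProj (q t : ℕ) :
    Matrix (Fin t → Fin q) (Fin t → Fin q) ℂ :=
  Matrix.of fun x y =>
    (t.factorial : ℂ)⁻¹ * ∑ π : Equiv.Perm (Fin t), if x ∘ ⇑π = y then 1 else 0

/-- `t`-fold tensor power of a matrix. -/
noncomputable def tpow (t : ℕ) {q : ℕ} (P : Matrix (Fin q) (Fin q) ℂ) :
    Matrix (Fin t → Fin q) (Fin t → Fin q) ℂ :=
  Matrix.of fun x y => ∏ i, P (x i) (y i)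

/-- Norm of the projected vector `P ψ`. -/
noncomputable def pnorm {q : ℕ} (P : Matrix (Fin q) (Fin q) ℂ) (v : Fin q → ℂ) : ℝ :=
  Real.sqrt (∑ i, ‖P.mulVec v i‖ ^ 2)

/-- Normalized projected state `P ψ / ‖P ψ‖` (the zero vector when `Pψ = 0`). -/
noncomputable def ptil {q : ℕ} (P : Matrix (Fin q) (Fin q) ℂ) (v : Fin q → ℂ) :
    Fin q → ℂ :=
  fun i => P.mulVec v i / (pnorm P v : ℂ)

section Aux
open Finset MulAction

attribute [local instance] arrowAction

/- ### tensor power and symmetrizer algebra -/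

lemma tpow_mul_tpow {q : ℕ} (t : ℕ) (A B : Matrix (Fin q) (Fin q) ℂ) :
    tpow t (A * B) = tpow t A * tpow t B := by
  ext x y
  simp only [tpow, Matrix.mul_apply, Matrix.of_apply]
  rw [Finset.prod_univ_sum]
  rw [Fintype.piFinset_univ]
  simp [Finset.prod_mul_distrib]

lemma tpow_one {q : ℕ} (t : ℕ) : tpow t (1 : Matrix (Fin q) (Fin q) ℂ) = 1 := by
  ext x y
  by_cases h : x = y
  · subst h; simp [tpow, Matrix.one_apply]
  · obtain ⟨i, hi⟩ : ∃ i, x i ≠ y i := by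
      by_contra hc; push_neg at hc; exact h (funext hc)
    rw [tpow]
    simp only [Matrix.of_apply, Matrix.one_apply, if_neg h]
    exact Finset.prod_eq_zero (Finset.mem_univ i) (by simp [Matrix.one_apply, hi])

lemma symProj_mul_tpow_apply {q : ℕ} (t : ℕ) (A : Matrix (Fin q) (Fin q) ℂ)
    (x y : Fin t → Fin q) :
    (symProj q t * tpow t A) x y
      = (t.factorial : ℂ)⁻¹ * ∑ π : Equiv.Perm (Fin t), ∏ i, A (x (π i)) (y i) := by
  simp only [Matrix.mul_apply, symProj, tpow, Matrix.of_apply]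
  rw [Finset.sum_congr rfl (fun z _ => by rw [mul_assoc, Finset.sum_mul]), ← Finset.mul_sum]
  congr 1
  rw [Finset.sum_comm]
  refine Finset.sum_congr rfl fun π _ => ?_
  rw [Finset.sum_eq_single (x ∘ ⇑π)]
  · simp
  · intro z _ hz
    rw [if_neg (by exact fun h => hz h.symm), zero_mul]
  · simp

lemma tpow_mul_symProj_apply {q : ℕ} (t : ℕ) (A : Matrix (Fin q) (Fin q) ℂ)
    (x y : Fin t → Fin q) :
    (tpow t A * symProj q t) x y
      = (t.factorial : ℂ)⁻¹ * ∑ π : Equiv.Perm (Fin t), ∏ i, A (x (π i)) (y i) := by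
  simp only [Matrix.mul_apply, symProj, tpow, Matrix.of_apply]
  rw [Finset.sum_congr rfl (fun z _ => by
        rw [mul_comm, mul_assoc, Finset.sum_mul]), ← Finset.mul_sum]
  congr 1
  rw [Finset.sum_comm]
  refine Finset.sum_congr rfl fun π _ => ?_
  have hcond : ∀ z : Fin t → Fin q, (z ∘ ⇑π = y) ↔ (z = y ∘ ⇑π⁻¹) := by
    intro z
    constructor
    · intro h; funext i
      have := congrFun h (π⁻¹ i); simpa using this
    · intro h; subst h; funext i; simp
  simp_rw [hcond]
  rw [Finset.sum_eq_single (y ∘ ⇑π⁻¹)]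
  · rw [if_pos rfl, one_mul]
    have := Equiv.prod_comp π (fun i => A (x i) (y (π⁻¹ i)))
    simp only [show ∀ i, π⁻¹ (π i) = i from fun i => by simp] at this
    rw [this]
    simp [Function.comp]
  · intro z _ hz; rw [if_neg hz, zero_mul]
  · simp

lemma symProj_comm {q : ℕ} (t : ℕ) (A : Matrix (Fin q) (Fin q) ℂ) :
    symProj q t * tpow t A = tpow t A * symProj q t := by
  ext x y
  rw [symProj_mul_tpow_apply, tpow_mul_symProj_apply]

/- ### counting orbits of tuples: Burnside's lemma and `Sym` -/

variable {α : Type*} [Fintype α] [LinearOrder α] [DecidableEq α] (t : ℕ)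

noncomputable def toSym (x : Fin t → α) : Sym α t :=
  ⟨(List.ofFn x : Multiset α), by simp⟩

omit [Fintype α] [LinearOrder α] [DecidableEq α] in
lemma toSym_comp_perm (x : Fin t → α) (σ : Equiv.Perm (Fin t)) :
    toSym t (x ∘ ⇑σ) = toSym t x := by
  apply Subtype.ext
  exact Multiset.coe_eq_coe.mpr (σ.ofFn_comp_perm x)

omit [Fintype α] [DecidableEq α] in
lemma toSym_inj {x y : Fin t → α} (h : toSym t x = toSym t y) :
    ∃ σ : Equiv.Perm (Fin t), x = y ∘ ⇑σ := by
  have hperm : List.Perm (List.ofFn x) (List.ofFn y) := by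
    have := congrArg Subtype.val h
    exact Multiset.coe_eq_coe.mp this
  have hx : List.Perm (List.ofFn (x ∘ ⇑(Tuple.sort x))) (List.ofFn (y ∘ ⇑(Tuple.sort y))) :=
    ((Tuple.sort x).ofFn_comp_perm x).trans
      (hperm.trans ((Tuple.sort y).ofFn_comp_perm y).symm)
  have heq : x ∘ ⇑(Tuple.sort x) = y ∘ ⇑(Tuple.sort y) := by
    apply List.ofFn_injective
    exact List.Perm.eq_of_sortedLE
      ((Tuple.monotone_sort x).sortedLE_ofFn) ((Tuple.monotone_sort y).sortedLE_ofFn) hx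
  refine ⟨(Tuple.sort x).symm.trans (Tuple.sort y), ?_⟩
  funext i
  have := congrFun heq ((Tuple.sort x).symm i)
  simpa using this

omit [Fintype α] [LinearOrder α] [DecidableEq α] in
lemma toSym_surj : Function.Surjective (toSym t (α := α)) := by
  rintro ⟨m, hm⟩
  induction m using Quotient.inductionOn with
  | h l =>
    have hl : l.length = t := by simpa using hm
    have hofn : List.ofFn (fun i : Fin t => l.get (Fin.cast hl.symm i)) = l := by
      apply List.ext_getElem (by simp [hl])
      intro i h1 h2
      simp
    refine ⟨fun i => l.get (Fin.cast hl.symm i), ?_⟩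
    apply Subtype.ext
    show ((List.ofFn _ : List α) : Multiset α) = _
    rw [hofn]
    rfl

noncomputable def orbSymEquiv :
    Quotient (orbitRel (Equiv.Perm (Fin t)) (Fin t → α)) ≃ Sym α t := by
  refine Equiv.ofBijective (Quotient.lift (toSym t) ?_) ⟨?_, ?_⟩
  · intro x y hxy
    obtain ⟨σ, hσ⟩ := hxy
    subst hσ
    show toSym t (y ∘ ⇑σ⁻¹) = toSym t y
    exact toSym_comp_perm t y σ⁻¹
  · intro a b
    induction a using Quotient.inductionOn with
    | h x =>
      induction b using Quotient.inductionOn with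
      | h y =>
        intro h
        obtain ⟨σ, hσ⟩ := toSym_inj t h
        apply Quotient.sound
        refine ⟨σ⁻¹, ?_⟩
        funext i
        show y (σ⁻¹⁻¹ i) = x i
        rw [hσ]; simp
  · intro s
    obtain ⟨x, hx⟩ := toSym_surj t s
    exact ⟨Quotient.mk _ x, hx⟩

lemma core_count :
    ∑ x : Fin t → α, (Finset.univ.filter fun π : Equiv.Perm (Fin t) => x ∘ ⇑π = x).card
      = Fintype.card (Sym α t) * t.factorial := by
  classical
  have swap :
      (∑ x : Fin t → α, (Finset.univ.filter fun π : Equiv.Perm (Fin t) => x ∘ ⇑π = x).card)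
        = ∑ π : Equiv.Perm (Fin t),
            (Finset.univ.filter fun x : Fin t → α => x ∘ ⇑π = x).card := by
    simp_rw [Finset.card_filter]
    rw [Finset.sum_comm]
  rw [swap]
  have inv_reindex :
      (∑ π : Equiv.Perm (Fin t), (Finset.univ.filter fun x : Fin t → α => x ∘ ⇑π = x).card)
        = ∑ π : Equiv.Perm (Fin t),
            (Finset.univ.filter fun x : Fin t → α => x ∘ ⇑π⁻¹ = x).card := by
    refine Fintype.sum_bijective (fun π => π⁻¹) (Equiv.inv (Equiv.Perm (Fin t))).bijective _ _
      fun π => ?_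
    simp
  rw [inv_reindex]
  haveI : Fintype (Quotient (orbitRel (Equiv.Perm (Fin t)) (Fin t → α))) :=
    Fintype.ofEquiv _ (orbSymEquiv t).symm
  have burnside := MulAction.sum_card_fixedBy_eq_card_orbits_mul_card_group
    (Equiv.Perm (Fin t)) (Fin t → α)
  have hfix : ∀ π : Equiv.Perm (Fin t),
      Fintype.card (fixedBy (Fin t → α) π)
        = (Finset.univ.filter fun x : Fin t → α => x ∘ ⇑π⁻¹ = x).card := by
    intro π
    rw [← Fintype.card_subtype]
    exact Fintype.card_congr (Equiv.subtypeEquivRight fun x => by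
      constructor
      · intro hx; funext i; exact congrFun hx i
      · intro hx; funext i; exact congrFun hx i)
  calc ∑ π : Equiv.Perm (Fin t), (Finset.univ.filter fun x : Fin t → α => x ∘ ⇑π⁻¹ = x).card
      = ∑ π : Equiv.Perm (Fin t), Fintype.card (fixedBy (Fin t → α) π) := by
        exact Finset.sum_congr rfl fun π _ => (hfix π).symm
    _ = Fintype.card (Quotient (orbitRel (Equiv.Perm (Fin t)) (Fin t → α)))
          * Fintype.card (Equiv.Perm (Fin t)) := burnside
    _ = Fintype.card (Sym α t) * t.factorial := by
        rw [Fintype.card_congr (orbSymEquiv t), Fintype.card_perm, Fintype.card_fin]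

set_option maxHeartbeats 1000000 in
lemma sum_cnt_filter {q : ℕ} (t : ℕ) (S : Finset (Fin q)) :
    ∑ x ∈ Finset.univ.filter (fun x : Fin t → Fin q => ∀ i, x i ∈ S),
        (Finset.univ.filter fun π : Equiv.Perm (Fin t) => x ∘ ⇑π = x).card
      = (S.card + t - 1).choose t * t.factorial := by
  have step1 : ∑ x ∈ Finset.univ.filter (fun x : Fin t → Fin q => ∀ i, x i ∈ S),
        (Finset.univ.filter fun π : Equiv.Perm (Fin t) => x ∘ ⇑π = x).card
      = ∑ y : Fin t → ↥S,
          (Finset.univ.filter fun π : Equiv.Perm (Fin t) => y ∘ ⇑π = y).card := by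
    refine Finset.sum_bij' (i := fun x hx => fun k =>
        (⟨x k, (Finset.mem_filter.mp hx).2 k⟩ : ↥S))
      (j := fun y _ => fun k => (y k : Fin q)) ?_ ?_ ?_ ?_ ?_
    · intro a ha; exact Finset.mem_univ _
    · intro y hy
      simp only [Finset.mem_filter, Finset.mem_univ, true_and]
      intro i; exact (y i).2
    · intro a ha; rfl
    · intro y hy; rfl
    · intro x hx
      congr 1
      apply Finset.filter_congr
      intro π _
      constructor
      · intro h; funext k
        apply Subtype.ext
        exact congrFun h k
      · intro h; funext k
        exact congrArg Subtype.val (congrFun h k)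
  exact step1.trans ((core_count t).trans (by rw [Sym.card_sym_eq_choose, Fintype.card_coe]))

/- ### trace of the symmetrized projected tensor power -/

lemma trace_diag_indicator {q : ℕ} (t : ℕ) (S : Finset (Fin q)) :
    Matrix.trace (symProj q t * tpow t (Matrix.diagonal (fun a => if a ∈ S then (1:ℂ) else 0)))
      = ((S.card + t - 1).choose t : ℂ) := by
  set D : Matrix (Fin q) (Fin q) ℂ := Matrix.diagonal (fun a => if a ∈ S then (1:ℂ) else 0)
    with hD
  have key : ∀ (x : Fin t → Fin q) (π : Equiv.Perm (Fin t)),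
      (∏ i, D (x (π i)) (x i))
        = (if ∀ i, x i ∈ S then (1:ℂ) else 0) * (if x ∘ ⇑π = x then (1:ℂ) else 0) := by
    intro x π
    by_cases hπ : x ∘ ⇑π = x
    · by_cases hS : ∀ i, x i ∈ S
      · rw [if_pos hS, if_pos hπ, one_mul]
        apply Finset.prod_eq_one
        intro i _
        have hxi : x (π i) = x i := congrFun hπ i
        rw [hxi, hD, Matrix.diagonal_apply_eq, if_pos (hS i)]
      · rw [if_neg hS, zero_mul]
        push_neg at hS
        obtain ⟨i, hi⟩ := hS
        refine Finset.prod_eq_zero (Finset.mem_univ i) ?_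
        have hxi : x (π i) = x i := congrFun hπ i
        rw [hxi, hD, Matrix.diagonal_apply_eq, if_neg hi]
    · rw [if_neg hπ, mul_zero]
      have : ∃ i, x (π i) ≠ x i := by
        by_contra hc; push_neg at hc
        exact hπ (funext fun i => hc i)
      obtain ⟨i, hi⟩ := this
      exact Finset.prod_eq_zero (Finset.mem_univ i) (Matrix.diagonal_apply_ne _ hi)
  have htr : Matrix.trace (symProj q t * tpow t D)
      = (t.factorial : ℂ)⁻¹ * ∑ x : Fin t → Fin q,
          (if ∀ i, x i ∈ S then (1:ℂ) else 0) *
            ((Finset.univ.filter fun π : Equiv.Perm (Fin t) => x ∘ ⇑π = x).card : ℂ) := by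
    rw [Matrix.trace]
    simp only [Matrix.diag]
    rw [Finset.sum_congr rfl (fun x _ => symProj_mul_tpow_apply t D x x), ← Finset.mul_sum]
    congr 1
    refine Finset.sum_congr rfl fun x _ => ?_
    rw [Finset.sum_congr rfl (fun π _ => key x π), ← Finset.mul_sum]
    congr 1
    rw [Finset.sum_boole]
  rw [htr]
  have : ∑ x : Fin t → Fin q,
      (if ∀ i, x i ∈ S then (1:ℂ) else 0) *
        ((Finset.univ.filter fun π : Equiv.Perm (Fin t) => x ∘ ⇑π = x).card : ℂ)
      = ((∑ x ∈ Finset.univ.filter (fun x : Fin t → Fin q => ∀ i, x i ∈ S),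
          (Finset.univ.filter fun π : Equiv.Perm (Fin t) => x ∘ ⇑π = x).card : ℕ) : ℂ) := by
    rw [Nat.cast_sum, Finset.sum_filter]
    refine Finset.sum_congr rfl fun x _ => ?_
    by_cases h : ∀ i, x i ∈ S
    · rw [if_pos h, if_pos h, one_mul]
    · rw [if_neg h, if_neg h, zero_mul]
  rw [this, sum_cnt_filter]
  push_cast
  rw [mul_comm ((t.factorial : ℂ)⁻¹)]
  rw [mul_assoc, mul_inv_cancel₀ (by exact_mod_cast Nat.factorial_ne_zero t), mul_one]

lemma trace_symProj_tpow {q d : ℕ} (t : ℕ) (P : Matrix (Fin q) (Fin q) ℂ)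
    (hP1 : Pᴴ = P) (hP2 : P * P = P) (hPtr : P.trace = (d : ℂ)) :
    Matrix.trace (symProj q t * tpow t P) = (((d + t - 1).choose t : ℕ) : ℂ) := by
  classical
  have hH : P.IsHermitian := hP1
  set U : Matrix (Fin q) (Fin q) ℂ := (Matrix.IsHermitian.eigenvectorUnitary hH :
    Matrix (Fin q) (Fin q) ℂ) with hUdef
  have hUmem := (Matrix.IsHermitian.eigenvectorUnitary hH).2
  have hU : star U * U = 1 := (Matrix.mem_unitaryGroup_iff'.mp hUmem)
  set ev : Fin q → ℝ := hH.eigenvalues with hevdef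
  set D : Matrix (Fin q) (Fin q) ℂ := Matrix.diagonal (fun a => ((ev a : ℝ) : ℂ)) with hDdef
  have hspec : P = U * D * star U := by
    have := hH.spectral_theorem
    rw [Unitary.conjStarAlgAut_apply] at this
    exact this
  have cancel : ∀ X : Matrix (Fin q) (Fin q) ℂ, star U * (U * X * star U) * U = X := by
    intro X
    calc star U * (U * X * star U) * U = (star U * U) * X * (star U * U) := by
          noncomm_ring
      _ = X := by rw [hU]; simp
  have hDD : D * D = D := by
    have h1 : (U * D * star U) * (U * D * star U) = U * (D * D) * star U := by
      calc (U * D * star U) * (U * D * star U)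
          = U * (D * ((star U * U) * (D * star U))) := by noncomm_ring
        _ = U * (D * D) * star U := by rw [hU]; noncomm_ring
    have h2 : U * (D * D) * star U = U * D * star U := by
      rw [← h1, ← hspec, hP2, hspec]
    have h3 := congrArg (fun X => star U * X * U) h2
    simpa only [cancel] using h3
  have hev01 : ∀ a, ev a = 0 ∨ ev a = 1 := by
    intro a
    have h1 : ((ev a : ℂ)) * (ev a : ℂ) = (ev a : ℂ) := by
      have := congrFun (congrFun hDD a) a
      simpa [hDdef, Matrix.mul_apply, Matrix.diagonal_apply] using this
    have h2 : ev a * ev a = ev a := by exact_mod_cast h1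
    rcases mul_eq_zero.mp (show ev a * (ev a - 1) = 0 by ring_nf; linarith) with h | h
    · exact Or.inl h
    · right; linarith [h]
  have htrD : Matrix.trace D = (d : ℂ) := by
    have : Matrix.trace P = Matrix.trace D := by
      rw [hspec, Matrix.trace_mul_cycle, hU, Matrix.one_mul]
    rw [← this, hPtr]
  set S : Finset (Fin q) := Finset.univ.filter (fun a => ev a = 1) with hSdef
  have hDS : D = Matrix.diagonal (fun a => if a ∈ S then (1:ℂ) else 0) := by
    apply Matrix.ext
    intro a b
    by_cases hab : a = b
    · subst hab
      rw [hDdef, Matrix.diagonal_apply_eq, Matrix.diagonal_apply_eq]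
      rcases hev01 a with h | h
      · have ha : a ∉ S := by simp [hSdef, h]
        rw [h, if_neg ha]; simp
      · have ha : a ∈ S := by simp [hSdef, h]
        rw [h, if_pos ha]; simp
    · rw [hDdef, Matrix.diagonal_apply_ne _ hab, Matrix.diagonal_apply_ne _ hab]
  have hScard : S.card = d := by
    have h1 : Matrix.trace D = (S.card : ℂ) := by
      rw [hDS, Matrix.trace_diagonal]
      rw [Finset.sum_ite_mem]
      simp [Finset.univ_inter]
    have : ((S.card : ℕ) : ℂ) = (d : ℂ) := by rw [← h1, htrD]
    exact_mod_cast this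
  have hc : symProj q t * tpow t P = tpow t U * (symProj q t * tpow t D * tpow t (star U)) := by
    rw [hspec, tpow_mul_tpow, tpow_mul_tpow, ← Matrix.mul_assoc, ← Matrix.mul_assoc, symProj_comm]
    simp only [Matrix.mul_assoc]
  have hred : Matrix.trace (symProj q t * tpow t P) = Matrix.trace (symProj q t * tpow t D) := by
    rw [hc, Matrix.trace_mul_comm, Matrix.mul_assoc (symProj q t * tpow t D), ← tpow_mul_tpow,
      hU, tpow_one, Matrix.mul_one]
  rw [hred, hDS, trace_diag_indicator, hScard]

/- ### consequence of the design property -/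

lemma key_identity {q t N : ℕ} (hN : 0 < N) (ψ : Fin N → Fin q → ℂ)
    (hdesign : ∀ x y : Fin t → Fin q,
      (N : ℂ)⁻¹ * ∑ j, ∏ i, ψ j (x i) * (starRingEnd ℂ) (ψ j (y i))
        = symProj q t x y / (Nat.choose (q + t - 1) t : ℂ))
    (P : Matrix (Fin q) (Fin q) ℂ) (hP1 : Pᴴ = P) (x y : Fin t → Fin q) :
    ∑ j, ∏ i, (P.mulVec (ψ j)) (x i) * (starRingEnd ℂ) ((P.mulVec (ψ j)) (y i))
      = (N : ℂ) / (Nat.choose (q + t - 1) t : ℂ) * (tpow t P * symProj q t * tpow t P) x y := by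
  have hNne : (N : ℂ) ≠ 0 := Nat.cast_ne_zero.mpr hN.ne'
  have hd' : ∀ a b : Fin t → Fin q,
      (∑ j, ∏ i, ψ j (a i) * (starRingEnd ℂ) (ψ j (b i)))
        = (N : ℂ) * (symProj q t a b / (Nat.choose (q + t - 1) t : ℂ)) := by
    intro a b
    rw [← hdesign a b, ← mul_assoc, mul_inv_cancel₀ hNne, one_mul]
  have hPc : ∀ u w : Fin q, (starRingEnd ℂ) (P u w) = P w u := by
    intro u w
    conv_rhs => rw [← hP1]
    rw [Matrix.conjTranspose_apply]
    rfl
  have hmv : ∀ (v : Fin q → ℂ) (z : Fin t → Fin q),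
      (∏ i, P.mulVec v (z i)) = ∑ a : Fin t → Fin q, ∏ i, P (z i) (a i) * v (a i) := by
    intro v z
    have h1 : ∀ i : Fin t, P.mulVec v (z i) = ∑ c, P (z i) c * v c := by
      intro i; simp [Matrix.mulVec, dotProduct]
    rw [Finset.prod_congr rfl fun i _ => h1 i, Finset.prod_univ_sum, Fintype.piFinset_univ]
  have hmvc : ∀ (v : Fin q → ℂ) (z : Fin t → Fin q),
      (∏ i, (starRingEnd ℂ) (P.mulVec v (z i)))
        = ∑ b : Fin t → Fin q,
            ∏ i, (starRingEnd ℂ) (P (z i) (b i)) * (starRingEnd ℂ) (v (b i)) := by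
    intro v z
    have h1 : ∀ i : Fin t, (starRingEnd ℂ) (P.mulVec v (z i))
        = ∑ c, (starRingEnd ℂ) (P (z i) c) * (starRingEnd ℂ) (v c) := by
      intro i
      rw [show P.mulVec v (z i) = ∑ c, P (z i) c * v c by simp [Matrix.mulVec, dotProduct],
        map_sum]
      exact Finset.sum_congr rfl fun c _ => by rw [_root_.map_mul]
    rw [Finset.prod_congr rfl fun i _ => h1 i, Finset.prod_univ_sum, Fintype.piFinset_univ]
  calc ∑ j, ∏ i, (P.mulVec (ψ j)) (x i) * (starRingEnd ℂ) ((P.mulVec (ψ j)) (y i))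
      = ∑ j, (∑ a : Fin t → Fin q, ∏ i, P (x i) (a i) * ψ j (a i)) *
          (∑ b : Fin t → Fin q,
            ∏ i, (starRingEnd ℂ) (P (y i) (b i)) * (starRingEnd ℂ) (ψ j (b i))) := by
        refine Finset.sum_congr rfl fun j _ => ?_
        rw [Finset.prod_mul_distrib, hmv (ψ j) x, hmvc (ψ j) y]
    _ = ∑ j, ∑ a : Fin t → Fin q, ∑ b : Fin t → Fin q,
          (∏ i, P (x i) (a i) * ψ j (a i)) *
            (∏ i, (starRingEnd ℂ) (P (y i) (b i)) * (starRingEnd ℂ) (ψ j (b i))) := by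
        exact Finset.sum_congr rfl fun j _ => by rw [Finset.sum_mul_sum]
    _ = ∑ a : Fin t → Fin q, ∑ b : Fin t → Fin q,
          ((∏ i, P (x i) (a i)) * (∏ i, (starRingEnd ℂ) (P (y i) (b i)))) *
            ∑ j, ∏ i, ψ j (a i) * (starRingEnd ℂ) (ψ j (b i)) := by
        rw [Finset.sum_comm]
        refine Finset.sum_congr rfl fun a _ => ?_
        rw [Finset.sum_comm]
        refine Finset.sum_congr rfl fun b _ => ?_
        rw [Finset.mul_sum]
        refine Finset.sum_congr rfl fun j _ => ?_
        simp only [Finset.prod_mul_distrib]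
        ring
    _ = ∑ a : Fin t → Fin q, ∑ b : Fin t → Fin q,
          ((∏ i, P (x i) (a i)) * (∏ i, (starRingEnd ℂ) (P (y i) (b i)))) *
            ((N : ℂ) * (symProj q t a b / (Nat.choose (q + t - 1) t : ℂ))) := by
        exact Finset.sum_congr rfl fun a _ => Finset.sum_congr rfl fun b _ => by rw [hd']
    _ = (N : ℂ) / (Nat.choose (q + t - 1) t : ℂ) *
          ∑ a : Fin t → Fin q, ∑ b : Fin t → Fin q,
            (∏ i, P (x i) (a i)) * symProj q t a b * ∏ i, P (b i) (y i) := by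
        rw [Finset.mul_sum]
        refine Finset.sum_congr rfl fun a _ => ?_
        rw [Finset.mul_sum]
        refine Finset.sum_congr rfl fun b _ => ?_
        rw [Finset.prod_congr rfl fun i _ => hPc (y i) (b i)]
        ring
    _ = (N : ℂ) / (Nat.choose (q + t - 1) t : ℂ) * (tpow t P * symProj q t * tpow t P) x y := by
        congr 1
        have hR : (tpow t P * symProj q t * tpow t P) x y
            = ∑ c : Fin t → Fin q, ∑ a : Fin t → Fin q,
                (tpow t P x a * symProj q t a c) * tpow t P c y := by
          rw [Matrix.mul_apply]
          refine Finset.sum_congr rfl fun c _ => ?_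
          rw [Matrix.mul_apply, Finset.sum_mul]
        rw [hR, Finset.sum_comm]
        exact Finset.sum_congr rfl fun a _ => Finset.sum_congr rfl fun b _ => rfl

/- ### `pnorm` powers as diagonal sums -/

lemma pnorm_pow_eq {q : ℕ} (t : ℕ) (P : Matrix (Fin q) (Fin q) ℂ) (v : Fin q → ℂ) :
    ((pnorm P v ^ (2 * t) : ℝ) : ℂ)
      = ∑ x : Fin t → Fin q,
          ∏ i, (P.mulVec v) (x i) * (starRingEnd ℂ) ((P.mulVec v) (x i)) := by
  have h2 : (pnorm P v) ^ 2 = ∑ a, ‖P.mulVec v a‖ ^ 2 :=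
    Real.sq_sqrt (Finset.sum_nonneg fun a _ => by positivity)
  have h3 : (pnorm P v) ^ (2 * t) = (∑ a, ‖P.mulVec v a‖ ^ 2) ^ t := by
    rw [pow_mul, h2]
  rw [h3]
  have hz : ∀ a : Fin q, ((‖P.mulVec v a‖ ^ 2 : ℝ) : ℂ)
      = (P.mulVec v) a * (starRingEnd ℂ) ((P.mulVec v) a) := by
    intro a
    rw [Complex.mul_conj]
    norm_cast
    rw [Complex.sq_norm]
  rw [Complex.ofReal_pow, Complex.ofReal_sum]
  rw [Finset.sum_congr rfl fun a _ => hz a]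
  rw [show ((∑ a, (P.mulVec v) a * (starRingEnd ℂ) ((P.mulVec v) a)) ^ t)
      = ∏ _i : Fin t, (∑ a, (P.mulVec v) a * (starRingEnd ℂ) ((P.mulVec v) a)) by
    rw [Finset.prod_const, Finset.card_univ, Fintype.card_fin]]
  rw [Finset.prod_univ_sum, Fintype.piFinset_univ]

end Aux

/-- Projecting a uniform state `t`-design in dimension `q` onto a `d`-dimensional
subspace (`P` an orthogonal projector of rank `d`, `d ≤ q`) and reweighting by
`w̃_j = ‖Pψ_j‖^{2t} / ∑_k ‖Pψ_k‖^{2t}` yields a weighted state `t`-design for the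
subspace: the weighted average of `(|ψ̃_j⟩⟨ψ̃_j|)^{⊗t}` equals the normalized
projector onto the symmetric subspace of `V^{⊗t}` (entrywise). -/
theorem stmt_2 (q d t N : ℕ) (hd : 0 < d) (hdq : d ≤ q) (ht : 0 < t) (hN : 0 < N)
    (ψ : Fin N → (Fin q → ℂ))
    (hunit : ∀ j, ∑ i, ‖ψ j i‖ ^ 2 = 1)
    (hdesign : ∀ x y : Fin t → Fin q,
      (N : ℂ)⁻¹ * ∑ j, ∏ i, ψ j (x i) * (starRingEnd ℂ) (ψ j (y i))
        = symProj q t x y / (Nat.choose (q + t - 1) t : ℂ))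
    (P : Matrix (Fin q) (Fin q) ℂ)
    (hP1 : Pᴴ = P) (hP2 : P * P = P) (hPtr : P.trace = (d : ℂ)) :
    ∀ x y : Fin t → Fin q,
      ∑ j, ((pnorm P (ψ j) ^ (2 * t) / ∑ k, pnorm P (ψ k) ^ (2 * t) : ℝ) : ℂ) *
          ∏ i, ptil P (ψ j) (x i) * (starRingEnd ℂ) (ptil P (ψ j) (y i))
        = (tpow t P * symProj q t * tpow t P) x y / (Nat.choose (d + t - 1) t : ℂ) := by
  classical
  intro x y
  have hNne : (N : ℂ) ≠ 0 := Nat.cast_ne_zero.mpr hN.ne'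
  have hCqne : ((Nat.choose (q + t - 1) t : ℕ) : ℂ) ≠ 0 :=
    Nat.cast_ne_zero.mpr (Nat.choose_pos (by omega)).ne'
  have hCdne : ((Nat.choose (d + t - 1) t : ℕ) : ℂ) ≠ 0 :=
    Nat.cast_ne_zero.mpr (Nat.choose_pos (by omega)).ne'
  set Sr : ℝ := ∑ k, pnorm P (ψ k) ^ (2 * t) with hSrdef
  have htrace := trace_symProj_tpow (d := d) t P hP1 hP2 hPtr
  have hGtrace : Matrix.trace (tpow t P * symProj q t * tpow t P)
      = (((d + t - 1).choose t : ℕ) : ℂ) := by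
    rw [← symProj_comm, Matrix.mul_assoc, ← tpow_mul_tpow, hP2]
    exact htrace
  have hS : ((Sr : ℝ) : ℂ)
      = (N : ℂ) / ((Nat.choose (q + t - 1) t : ℕ) : ℂ) * (((d + t - 1).choose t : ℕ) : ℂ) := by
    rw [hSrdef]
    push_cast
    calc ∑ k, ((pnorm P (ψ k) : ℝ) : ℂ) ^ (2 * t)
        = ∑ k, ∑ z : Fin t → Fin q,
            ∏ i, (P.mulVec (ψ k)) (z i) * (starRingEnd ℂ) ((P.mulVec (ψ k)) (z i)) := by
          refine Finset.sum_congr rfl fun k _ => ?_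
          rw [← pnorm_pow_eq t P (ψ k)]
          push_cast
          ring
      _ = ∑ z : Fin t → Fin q, ∑ k,
            ∏ i, (P.mulVec (ψ k)) (z i) * (starRingEnd ℂ) ((P.mulVec (ψ k)) (z i)) :=
          Finset.sum_comm
      _ = ∑ z : Fin t → Fin q, (N : ℂ) / ((Nat.choose (q + t - 1) t : ℕ) : ℂ) *
            (tpow t P * symProj q t * tpow t P) z z := by
          exact Finset.sum_congr rfl fun z _ => key_identity hN ψ hdesign P hP1 z z
      _ = (N : ℂ) / ((Nat.choose (q + t - 1) t : ℕ) : ℂ) *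
            Matrix.trace (tpow t P * symProj q t * tpow t P) := by
          rw [← Finset.mul_sum]
          rfl
      _ = (N : ℂ) / ((Nat.choose (q + t - 1) t : ℕ) : ℂ) * (((d + t - 1).choose t : ℕ) : ℂ) := by
          rw [hGtrace]
  have hSne : ((Sr : ℝ) : ℂ) ≠ 0 := by
    rw [hS]
    exact mul_ne_zero (div_ne_zero hNne hCqne) hCdne
  have hterm : ∀ j, ((pnorm P (ψ j) ^ (2 * t) / Sr : ℝ) : ℂ) *
      ∏ i, ptil P (ψ j) (x i) * (starRingEnd ℂ) (ptil P (ψ j) (y i))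
      = ((Sr : ℝ) : ℂ)⁻¹ *
          ∏ i, (P.mulVec (ψ j)) (x i) * (starRingEnd ℂ) ((P.mulVec (ψ j)) (y i)) := by
    intro j
    by_cases hz : pnorm P (ψ j) = 0
    · have hsum0 : ∑ a, ‖P.mulVec (ψ j) a‖ ^ 2 = 0 := by
        have hle := Real.sqrt_eq_zero'.mp hz
        have hge : (0:ℝ) ≤ ∑ a, ‖P.mulVec (ψ j) a‖ ^ 2 :=
          Finset.sum_nonneg fun a _ => by positivity
        linarith
      have hmv0 : ∀ a, P.mulVec (ψ j) a = 0 := by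
        intro a
        have h := (Finset.sum_eq_zero_iff_of_nonneg
          (fun a _ => by positivity)).mp hsum0 a (Finset.mem_univ a)
        have : ‖P.mulVec (ψ j) a‖ = 0 := by
          nlinarith [norm_nonneg (P.mulVec (ψ j) a)]
        exact norm_eq_zero.mp this
      have i0 : Fin t := ⟨0, ht⟩
      rw [hz, zero_pow (by omega), zero_div, Complex.ofReal_zero, zero_mul]
      rw [Finset.prod_eq_zero (Finset.mem_univ i0) (by rw [hmv0 (x i0)]; ring), mul_zero]
    · have hpc : ((pnorm P (ψ j) : ℝ) : ℂ) ≠ 0 := Complex.ofReal_ne_zero.mpr hz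
      have hfac : ∀ i : Fin t, ptil P (ψ j) (x i) * (starRingEnd ℂ) (ptil P (ψ j) (y i))
          = ((P.mulVec (ψ j)) (x i) * (starRingEnd ℂ) ((P.mulVec (ψ j)) (y i)))
              / ((pnorm P (ψ j) : ℝ) : ℂ) ^ 2 := by
        intro i
        show (P.mulVec (ψ j) (x i) / _) * (starRingEnd ℂ) (P.mulVec (ψ j) (y i) / _) = _
        rw [map_div₀, Complex.conj_ofReal]
        ring
      have hprod : ∏ i, ptil P (ψ j) (x i) * (starRingEnd ℂ) (ptil P (ψ j) (y i))
          = (∏ i, (P.mulVec (ψ j)) (x i) * (starRingEnd ℂ) ((P.mulVec (ψ j)) (y i)))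
              / ((pnorm P (ψ j) : ℝ) : ℂ) ^ (2 * t) := by
        rw [Finset.prod_congr rfl fun i _ => hfac i, Finset.prod_div_distrib,
          Finset.prod_const, Finset.card_univ, Fintype.card_fin, ← pow_mul]
      rw [hprod]
      have hcast : ((pnorm P (ψ j) ^ (2 * t) / Sr : ℝ) : ℂ)
          = ((pnorm P (ψ j) : ℝ) : ℂ) ^ (2 * t) / ((Sr : ℝ) : ℂ) := by
        push_cast
        ring
      rw [hcast]
      have hpne : ((pnorm P (ψ j) : ℝ) : ℂ) ^ (2 * t) ≠ 0 := pow_ne_zero _ hpc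
      field_simp
  rw [Finset.sum_congr rfl fun j _ => hterm j, ← Finset.mul_sum,
    key_identity hN ψ hdesign P hP1 x y, hS]
  field_simp
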